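/- arXiv:2006.16491 — 6 statements merged into one kernel-verified Lean document; each statement's English description precedes it below -/
import Mathlib

section
/- For every positive integer x, π₂(x) = (π(√x) − π(√x)²)/2 + Σ_{p ≤ √x} π(x/p), where the sum runs over all primes p ≤ √x. -/
open Finset

/-- The finite set of primes `p ≤ y` (for a real bound `y`). -/
noncomputable def primesUpTo (y : ℝ) : Finset ℕ :=
  (Finset.range (⌊y⌋₊ + 1)).filter Nat.Prime

/-- The prime counting function `π(x)`: the number of primes `p ≤ x`. -/
noncomputable def primePi (x : ℝ) : ℕ := (primesUpTo x).card

/-- The semiprime counting function `π₂(x)`: the number of `m ≤ x` which are a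
product of exactly two primes (counted with multiplicity). -/
noncomputable def pi2 (x : ℝ) : ℕ :=
  ((Finset.range (⌊x⌋₊ + 1)).filter
    (fun m => ArithmeticFunction.cardFactors m = 2)).card

lemma mem_primesUpTo {y : ℝ} (hy : 0 ≤ y) {p : ℕ} :
    p ∈ primesUpTo y ↔ p.Prime ∧ (p : ℝ) ≤ y := by
  simp [primesUpTo, Nat.lt_succ_iff, Nat.le_floor_iff hy, and_comm]

lemma omega_two_iff {m : ℕ} :
    ArithmeticFunction.cardFactors m = 2 ↔
      ∃ p q : ℕ, p.Prime ∧ q.Prime ∧ p ≤ q ∧ m = p * q := by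
  constructor
  · intro h
    have hm : m ≠ 0 := by
      rintro rfl
      simp at h
    rw [ArithmeticFunction.cardFactors_apply] at h
    obtain ⟨p, q, hl⟩ := List.length_eq_two.mp h
    have hp : p.Prime := Nat.prime_of_mem_primeFactorsList (by rw [hl]; simp)
    have hq : q.Prime := Nat.prime_of_mem_primeFactorsList (by rw [hl]; simp)
    have hs := Nat.primeFactorsList_sorted m
    rw [hl] at hs
    have hpq : p ≤ q := by
      have := List.pairwise_cons.mp hs.pairwise
      exact this.1 q (by simp)
    have hprod := Nat.prod_primeFactorsList hm
    rw [hl] at hprod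
    exact ⟨p, q, hp, hq, hpq, by rw [← hprod]; simp⟩
  · rintro ⟨p, q, hp, hq, hpq, rfl⟩
    rw [ArithmeticFunction.cardFactors_mul hp.pos.ne' hq.pos.ne',
      ArithmeticFunction.cardFactors_apply_prime hp,
      ArithmeticFunction.cardFactors_apply_prime hq]

lemma pair_unique {p q p' q' : ℕ} (hp : p.Prime) (hq : q.Prime) (hp' : p'.Prime)
    (hq' : q'.Prime) (h1 : p ≤ q) (h2 : p' ≤ q') (h : p * q = p' * q') :
    p = p' ∧ q = q' := by
  have key : p = p' := by
    have hd : p ∣ p' * q' := ⟨q, h.symm⟩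
    rcases (Nat.Prime.dvd_mul hp).mp hd with h' | h'
    · exact (Nat.prime_dvd_prime_iff_eq hp hp').mp h'
    · have hpq' : p = q' := (Nat.prime_dvd_prime_iff_eq hp hq').mp h'
      have hd' : p' ∣ p * q := ⟨q', h⟩
      rcases (Nat.Prime.dvd_mul hp').mp hd' with h'' | h''
      · exact ((Nat.prime_dvd_prime_iff_eq hp' hp).mp h'').symm
      · have hp'q : p' = q := (Nat.prime_dvd_prime_iff_eq hp' hq).mp h''
        omega
  refine ⟨key, ?_⟩
  subst key
  exact Nat.eq_of_mul_eq_mul_left hp.pos h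

lemma sum_filter_lt (s : Finset ℕ) :
    ∑ a ∈ s, (s.filter (· < a)).card = ∑ i ∈ Finset.range s.card, i := by
  induction s using Finset.induction_on_max with
  | empty => simp
  | insert a s ha ih =>
    have ha' : a ∉ s := fun h => lt_irrefl a (ha a h)
    rw [Finset.sum_insert ha', Finset.card_insert_of_notMem ha',
      Finset.sum_range_succ]
    have h1 : (insert a s).filter (· < a) = s := by
      rw [Finset.filter_insert]
      simp only [lt_irrefl, if_neg (lt_irrefl a)]
      exact Finset.filter_true_of_mem fun b hb => ha b hb
    have h2 : ∀ b ∈ s, ((insert a s).filter (· < b)).card = (s.filter (· < b)).card := by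
      intro b hb
      congr 1
      rw [Finset.filter_insert, if_neg (by exact fun hab => absurd (ha b hb) (by omega))]
    rw [h1, Finset.sum_congr rfl h2, ih]
    ring

lemma cast_tri {s n : ℕ} (h : 2 * s = n * (n - 1)) : (2:ℝ) * s = (n:ℝ)^2 - n := by
  rcases n with _ | k
  · have hs : s = 0 := by omega
    subst hs; simp
  · have h' : 2 * s = (k + 1) * k := by simpa using h
    have h2 := congrArg (Nat.cast : ℕ → ℝ) h'
    push_cast at h2
    push_cast
    linarith

theorem stmt0 (x : ℕ) (hx : 0 < x) :
    (pi2 x : ℝ) =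
      ((primePi (Real.sqrt x) : ℝ) - (primePi (Real.sqrt x) : ℝ) ^ 2) / 2
        + ∑ p ∈ primesUpTo (Real.sqrt x), (primePi ((x : ℝ) / (p : ℝ)) : ℝ) := by
  have hx0 : (0:ℝ) ≤ (x:ℝ) := Nat.cast_nonneg x
  have hsq0 : (0:ℝ) ≤ Real.sqrt x := Real.sqrt_nonneg _
  set P := primesUpTo (Real.sqrt x) with hPdef
  -- facts about members of P
  have hPfact : ∀ p ∈ P, p.Prime ∧ (p : ℝ) ≤ Real.sqrt x := fun p hp =>
    (mem_primesUpTo hsq0).mp hp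
  have hdiv_nonneg : ∀ p ∈ P, (0:ℝ) ≤ (x:ℝ) / p := by
    intro p hp
    exact div_nonneg hx0 (Nat.cast_nonneg p)
  set Q : ℕ → Finset ℕ := fun p => (primesUpTo ((x:ℝ)/p)).filter (fun q => p ≤ q) with hQdef
  -- membership in Q p
  have hQmem : ∀ p ∈ P, ∀ q : ℕ, q ∈ Q p ↔ q.Prime ∧ p ≤ q ∧ p * q ≤ x := by
    intro p hp q
    obtain ⟨hpp, hple⟩ := hPfact p hp
    have hp0 : (0:ℝ) < (p:ℝ) := by exact_mod_cast hpp.pos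
    rw [hQdef]
    simp only [Finset.mem_filter, mem_primesUpTo (hdiv_nonneg p hp)]
    constructor
    · rintro ⟨⟨hq, hqle⟩, hpq⟩
      refine ⟨hq, hpq, ?_⟩
      have : (p:ℝ) * q ≤ x := by
        rw [mul_comm]
        exact (le_div_iff₀ hp0).mp hqle
      exact_mod_cast this
    · rintro ⟨hq, hpq, hle⟩
      refine ⟨⟨hq, ?_⟩, hpq⟩
      rw [le_div_iff₀ hp0]
      have : ((p * q : ℕ) : ℝ) ≤ x := by exact_mod_cast hle
      rw [Nat.cast_mul] at this
      linarith
  -- the semiprime set is a disjoint union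
  have hS : (Finset.range (x + 1)).filter
      (fun m => ArithmeticFunction.cardFactors m = 2)
      = P.biUnion (fun p => (Q p).image (p * ·)) := by
    ext m
    simp only [Finset.mem_filter, Finset.mem_range, Finset.mem_biUnion, Finset.mem_image,
      Nat.lt_succ_iff]
    constructor
    · rintro ⟨hmle, hΩ⟩
      obtain ⟨p, q, hp, hq, hpq, rfl⟩ := omega_two_iff.mp hΩ
      have hpP : p ∈ P := by
        rw [mem_primesUpTo hsq0]
        refine ⟨hp, ?_⟩
        rw [Real.le_sqrt (Nat.cast_nonneg p) hx0]
        have : p * p ≤ x := le_trans (Nat.mul_le_mul_left p hpq) hmle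
        have : ((p * p : ℕ) : ℝ) ≤ x := by exact_mod_cast this
        rw [Nat.cast_mul] at this
        nlinarith
      exact ⟨p, hpP, q, (hQmem p hpP q).mpr ⟨hq, hpq, hmle⟩, rfl⟩
    · rintro ⟨p, hpP, q, hqQ, rfl⟩
      obtain ⟨hq, hpq, hle⟩ := (hQmem p hpP q).mp hqQ
      exact ⟨hle, omega_two_iff.mpr ⟨p, q, (hPfact p hpP).1, hq, hpq, rfl⟩⟩
  -- cardinality via biUnion
  have hdisj : ∀ p ∈ P, ∀ p' ∈ P, p ≠ p' →
      Disjoint ((Q p).image (p * ·)) ((Q p').image (p' * ·)) := by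
    intro p hp p' hp' hne
    rw [Finset.disjoint_left]
    rintro m hm hm'
    simp only [Finset.mem_image] at hm hm'
    obtain ⟨q, hq, rfl⟩ := hm
    obtain ⟨q', hq', heq⟩ := hm'
    obtain ⟨hqp, hpq, -⟩ := (hQmem p hp q).mp hq
    obtain ⟨hqp', hpq', -⟩ := (hQmem p' hp' q').mp hq'
    exact hne ((pair_unique (hPfact p hp).1 hqp (hPfact p' hp').1 hqp' hpq hpq' heq.symm).1)
  have hcard : pi2 x = ∑ p ∈ P, (Q p).card := by
    have : pi2 x = ((Finset.range (x + 1)).filter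
        (fun m => ArithmeticFunction.cardFactors m = 2)).card := by
      simp [pi2]
    rw [this, hS, Finset.card_biUnion hdisj]
    refine Finset.sum_congr rfl fun p hp => ?_
    exact Finset.card_image_of_injective _ (mul_right_injective₀ (hPfact p hp).1.pos.ne')
  -- card (Q p) + #(primes < p) = primePi (x/p)
  have hQcard : ∀ p ∈ P, (Q p).card + (P.filter (· < p)).card
      = primePi ((x:ℝ) / p) := by
    intro p hp
    obtain ⟨hpp, hple⟩ := hPfact p hp
    have hp0 : (0:ℝ) < (p:ℝ) := by exact_mod_cast hpp.pos
    have hsqle : Real.sqrt x ≤ (x:ℝ) / p := by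
      rw [le_div_iff₀ hp0]
      calc Real.sqrt x * p ≤ Real.sqrt x * Real.sqrt x :=
            mul_le_mul_of_nonneg_left hple hsq0
        _ = x := Real.mul_self_sqrt hx0
    have hfilter : P.filter (· < p) = (primesUpTo ((x:ℝ)/p)).filter (¬ p ≤ ·) := by
      ext q
      simp only [Finset.mem_filter, hPdef, mem_primesUpTo hsq0,
        mem_primesUpTo (hdiv_nonneg p hp), not_le]
      constructor
      · rintro ⟨⟨hq, -⟩, hlt⟩
        refine ⟨⟨hq, ?_⟩, hlt⟩
        calc (q:ℝ) ≤ p := by exact_mod_cast hlt.le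
          _ ≤ Real.sqrt x := hple
          _ ≤ (x:ℝ)/p := hsqle
      · rintro ⟨⟨hq, -⟩, hlt⟩
        refine ⟨⟨hq, ?_⟩, hlt⟩
        calc (q:ℝ) ≤ p := by exact_mod_cast hlt.le
          _ ≤ Real.sqrt x := hple
    rw [hfilter, hQdef]
    simp only [primePi]
    exact Finset.card_filter_add_card_filter_not _
  -- main natural-number identity
  have hmain : pi2 x + ∑ p ∈ P, (P.filter (· < p)).card
      = ∑ p ∈ P, primePi ((x:ℝ) / p) := by
    rw [hcard, ← Finset.sum_add_distrib]
    exact Finset.sum_congr rfl hQcard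
  -- evaluate the triangular sum
  have htri : 2 * ∑ p ∈ P, (P.filter (· < p)).card = P.card * (P.card - 1) := by
    rw [sum_filter_lt, mul_comm]
    exact Finset.sum_range_id_mul_two P.card
  have hn' : primePi (Real.sqrt x) = P.card := rfl
  have htriR : (2:ℝ) * (∑ p ∈ P, (P.filter (· < p)).card : ℕ)
      = (P.card:ℝ)^2 - P.card := cast_tri htri
  have hR := congrArg (Nat.cast : ℕ → ℝ) hmain
  push_cast at hR
  rw [hn']
  push_cast at htriR ⊢
  linarith
end

section
/- For every integer n ≥ 1, the series Σ_{i=1}^∞ C(n+i−1, n−1)/(i·2^i) converges and equals q_n + log 2, where C(·,·) denotes the binomial coefficient. -/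
set_option maxHeartbeats 1000000

open Finset

/-- The sequence `q_n`: `q_1 = 0` and `q_n = ∑_{i=1}^{n-1} (2^i - 1)/i` for `n ≥ 2`. -/
noncomputable def qseq (n : ℕ) : ℝ :=
  ∑ i ∈ Finset.Icc 1 (n - 1), ((2 : ℝ) ^ i - 1) / (i : ℝ)

lemma key_hasSum (n : ℕ) (hn : 1 ≤ n) :
    HasSum (fun i : ℕ => ((n + i).choose n : ℝ) / (((i : ℝ) + 1) * 2 ^ (i + 1)))
      ((2 ^ n - 1) / n) := by
  have hr : ‖(1/2 : ℝ)‖ < 1 := by rw [Real.norm_eq_abs, abs_of_pos] <;> norm_num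
  have h := hasSum_choose_mul_geometric_of_norm_lt_one (n - 1) hr
  have hS : (1 : ℝ) / (1 - 1/2) ^ ((n-1) + 1) = 2 ^ n := by
    rw [Nat.sub_add_cancel hn]
    norm_num [← inv_pow]
  rw [hS] at h
  have h2 : HasSum (fun i : ℕ => (((i + 1) + (n-1)).choose (n-1) : ℝ) * (1/2) ^ (i + 1))
      ((2:ℝ) ^ n - 1) := by
    refine (hasSum_nat_add_iff (f := fun j : ℕ => (((j + (n-1)).choose (n-1) : ℕ) : ℝ) * (1/2) ^ j) 1).2 ?_
    simpa using h
  have h3 := h2.div_const (n : ℝ)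
  convert h3 using 2 with i
  · rfl
  have hni : (i + 1) + (n - 1) = n + i := by omega
  rw [hni]
  have hc : (n + i).choose n * n = (n + i).choose (n - 1) * (i + 1) := by
    have := Nat.choose_succ_right_eq (n + i) (n - 1)
    have h1 : n - 1 + 1 = n := by omega
    have h2 : n + i - (n - 1) = i + 1 := by omega
    rw [h1, h2] at this
    exact this
  have hcast : ((n + i).choose n : ℝ) * n = ((n + i).choose (n - 1) : ℝ) * (i + 1) := by
    exact_mod_cast congrArg (Nat.cast : ℕ → ℝ) hc
  have hn0 : (n : ℝ) ≠ 0 := by positivity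
  have hi0 : (i : ℝ) + 1 ≠ 0 := by positivity
  have hpow : (1/2:ℝ) ^ (i+1) * 2 ^ (i+1) = 1 := by rw [← mul_pow]; norm_num
  rw [div_eq_div_iff (by positivity) (by positivity)]
  linear_combination hcast - (((n + i).choose (n-1) : ℝ) * ((i:ℝ) + 1)) * hpow

theorem stmt3 (n : ℕ) (hn : 1 ≤ n) :
    HasSum (fun i : ℕ => ((n + (i + 1) - 1).choose (n - 1) : ℝ) / ((i + 1 : ℕ) * 2 ^ (i + 1)))
      (qseq n + Real.log 2) := by
  induction n, hn using Nat.le_induction with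
  | base =>
    have h := Real.hasSum_pow_div_log_of_abs_lt_one (x := (1/2 : ℝ))
      (by rw [abs_of_pos] <;> norm_num)
    have : qseq 1 = 0 := by simp [qseq]
    rw [this, zero_add]
    have hv : -Real.log (1 - 1/2) = Real.log 2 := by
      rw [show (1:ℝ) - 1/2 = 2⁻¹ by norm_num, Real.log_inv]; ring
    rw [hv] at h
    convert h using 2 with i
    simp
    ring
  | succ n hn ih =>
    have hq : qseq (n + 1) = qseq n + ((2:ℝ) ^ n - 1) / n := by
      unfold qseq
      rw [Nat.add_sub_cancel, show n = (n - 1) + 1 by omega, Finset.sum_Icc_succ_top (by omega)]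
      rw [show n - 1 + 1 = n by omega]
    rw [hq, add_right_comm]
    have := ih.add (key_hasSum n hn)
    convert this using 2 with i
    have h1 : n + 1 + (i + 1) - 1 = (n + i) + 1 := by omega
    have h2 : n + 1 - 1 = (n - 1) + 1 := by omega
    have h3 : n + (i + 1) - 1 = n + i := by omega
    rw [h1, h2, h3, Nat.choose_succ_succ, show (n - 1).succ = n by omega]
    push_cast
    ring
end

section
/- Assume: (i) Σ_{p ≤ x} 1/p − log(log x) converges to a limit M as x → ∞; (ii) for every integer i ≥ 1, Σ_{p ≤ x} (log p)^i/p − (log x)^i/i converges as x → ∞. Then Σ_{p ≤ √x} (log x)/(p·(log x − log p)) = log(log x) + M + o(1) as x → ∞. -/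
open Finset Filter

lemma sqrt_tendsto_atTop' : Tendsto Real.sqrt atTop atTop := by
  apply tendsto_atTop_atTop.mpr
  intro b
  refine ⟨b ^ 2 ⊔ 0, fun x hx => ?_⟩
  calc b ≤ |b| := le_abs_self b
  _ = Real.sqrt (b ^ 2) := (Real.sqrt_sq_eq_abs b).symm
  _ ≤ Real.sqrt x := Real.sqrt_le_sqrt (le_trans le_sup_left hx)

lemma primesUpTo_mem' {y : ℝ} (hy : 0 ≤ y) {p : ℕ} (hp : p ∈ primesUpTo y) :
    p.Prime ∧ (p : ℝ) ≤ y := by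
  simp only [primesUpTo, mem_filter, mem_range, Nat.lt_succ_iff] at hp
  exact ⟨hp.2, (Nat.le_floor_iff hy).mp hp.1⟩

lemma aux_bounds' {x : ℝ} (hx : (16 : ℝ) ≤ x) {p : ℕ} (hp : p ∈ primesUpTo (Real.sqrt x)) :
    (1 : ℝ) ≤ p ∧ 0 ≤ Real.log p / Real.log x ∧ Real.log p / Real.log x ≤ 1 / 2 := by
  have hL : (0 : ℝ) < Real.log x := Real.log_pos (by linarith)
  obtain ⟨hprime, hple⟩ := primesUpTo_mem' (Real.sqrt_nonneg x) hp
  have h1p : (1 : ℝ) ≤ p := by exact_mod_cast hprime.one_lt.le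
  have hlp : 0 ≤ Real.log p := Real.log_nonneg h1p
  have hhalf : Real.log p ≤ Real.log x / 2 := by
    calc Real.log p ≤ Real.log (Real.sqrt x) := Real.log_le_log (by linarith) hple
    _ = Real.log x / 2 := Real.log_sqrt (by linarith)
  refine ⟨h1p, div_nonneg hlp hL.le, ?_⟩
  rw [div_le_iff₀ hL]
  linarith

lemma key_identity' {x : ℝ} (hx : (16 : ℝ) ≤ x) :
    ∑ p ∈ primesUpTo (Real.sqrt x), Real.log x / ((p : ℝ) * (Real.log x - Real.log p))
      = (∑ p ∈ primesUpTo (Real.sqrt x), (1 : ℝ) / p)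
        + ∑' k : ℕ, ∑ p ∈ primesUpTo (Real.sqrt x),
            (Real.log p / Real.log x) ^ (k + 1) / p := by
  have hL : (0 : ℝ) < Real.log x := Real.log_pos (by linarith)
  have hsum : ∀ p ∈ primesUpTo (Real.sqrt x),
      Summable (fun i : ℕ => (Real.log p / Real.log x) ^ i / (p : ℝ)) := by
    intro p hp
    obtain ⟨h1p, hr0, hr2⟩ := aux_bounds' hx hp
    exact (summable_geometric_of_lt_one hr0 (by linarith)).div_const _
  have step1 : ∀ p ∈ primesUpTo (Real.sqrt x),
      Real.log x / ((p : ℝ) * (Real.log x - Real.log p))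
        = ∑' i : ℕ, (Real.log p / Real.log x) ^ i / p := by
    intro p hp
    obtain ⟨h1p, hr0, hr2⟩ := aux_bounds' hx hp
    rw [tsum_div_const, tsum_geometric_of_lt_one hr0 (by linarith)]
    have hp0 : (0 : ℝ) < p := by linarith
    have hsub : 0 < Real.log x - Real.log p := by
      have := (div_le_iff₀ hL).mp hr2
      linarith
    have e : (1 - Real.log p / Real.log x) = (Real.log x - Real.log p) / Real.log x := by
      field_simp
    rw [e, inv_div, div_div, mul_comm (Real.log x - Real.log (p:ℝ)) (p:ℝ)]
  rw [Finset.sum_congr rfl step1, ← Summable.tsum_finsetSum hsum,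
    Summable.tsum_eq_zero_add (summable_sum hsum)]
  simp

lemma h_tendsto' (hBi : ∀ i : ℕ, 1 ≤ i → ∃ B : ℝ, Tendsto
      (fun x : ℝ =>
        (∑ p ∈ primesUpTo x, (Real.log p) ^ i / (p : ℝ)) - (Real.log x) ^ i / (i : ℝ))
      atTop (nhds B)) (k : ℕ) :
    Tendsto (fun x : ℝ => ∑ p ∈ primesUpTo (Real.sqrt x),
        (Real.log p / Real.log x) ^ (k + 1) / p)
      atTop (nhds ((1 / 2 : ℝ) ^ (k + 1) / ((k : ℝ) + 1))) := by
  obtain ⟨B, hB⟩ := hBi (k + 1) (Nat.le_add_left 1 k)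
  have hBs : Tendsto (fun x : ℝ =>
      (∑ p ∈ primesUpTo (Real.sqrt x), (Real.log p) ^ (k + 1) / (p : ℝ))
        - (Real.log (Real.sqrt x)) ^ (k + 1) / ((k : ℝ) + 1))
      atTop (nhds B) := by
    have := hB.comp sqrt_tendsto_atTop'
    simpa [Function.comp_def] using this
  have hinv : Tendsto (fun x : ℝ => ((Real.log x)⁻¹) ^ (k + 1)) atTop (nhds 0) := by
    have h1 : Tendsto (fun x : ℝ => (Real.log x)⁻¹) atTop (nhds 0) :=
      Real.tendsto_log_atTop.inv_tendsto_atTop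
    simpa using h1.pow (k + 1)
  have hmain : Tendsto (fun x : ℝ =>
      ((∑ p ∈ primesUpTo (Real.sqrt x), (Real.log p) ^ (k + 1) / (p : ℝ))
        - (Real.log (Real.sqrt x)) ^ (k + 1) / ((k : ℝ) + 1)) * ((Real.log x)⁻¹) ^ (k + 1)
      + (1 / 2 : ℝ) ^ (k + 1) / ((k : ℝ) + 1)) atTop
      (nhds ((1 / 2 : ℝ) ^ (k + 1) / ((k : ℝ) + 1))) := by
    have := (hBs.mul hinv).add_const ((1 / 2 : ℝ) ^ (k + 1) / ((k : ℝ) + 1))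
    simpa using this
  refine hmain.congr' ?_
  filter_upwards [eventually_ge_atTop (16 : ℝ)] with x hx
  have hL : (0 : ℝ) < Real.log x := Real.log_pos (by linarith)
  have e1 : (Real.log (Real.sqrt x)) ^ (k + 1) / ((k : ℝ) + 1) * ((Real.log x)⁻¹) ^ (k + 1)
      = (1 / 2 : ℝ) ^ (k + 1) / ((k : ℝ) + 1) := by
    rw [Real.log_sqrt (by linarith), div_mul_eq_mul_div, ← mul_pow]
    rw [div_mul_eq_mul_div, mul_inv_cancel₀ hL.ne', one_div]
  have e2 : ∑ p ∈ primesUpTo (Real.sqrt x), (Real.log p / Real.log x) ^ (k + 1) / (p : ℝ)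
      = (∑ p ∈ primesUpTo (Real.sqrt x), (Real.log p) ^ (k + 1) / (p : ℝ))
        * ((Real.log x)⁻¹) ^ (k + 1) := by
    rw [Finset.sum_mul]
    refine Finset.sum_congr rfl fun p _ => ?_
    rw [div_pow, inv_pow]
    ring
  rw [sub_mul, e1, e2]
  ring

lemma tail_tendsto' (hBi : ∀ i : ℕ, 1 ≤ i → ∃ B : ℝ, Tendsto
      (fun x : ℝ =>
        (∑ p ∈ primesUpTo x, (Real.log p) ^ i / (p : ℝ)) - (Real.log x) ^ i / (i : ℝ))
      atTop (nhds B)) :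
    Tendsto (fun x : ℝ => ∑' k : ℕ, ∑ p ∈ primesUpTo (Real.sqrt x),
        (Real.log p / Real.log x) ^ (k + 1) / p)
      atTop (nhds (Real.log 2)) := by
  have hval : ∑' k : ℕ, (1 / 2 : ℝ) ^ (k + 1) / ((k : ℝ) + 1) = Real.log 2 := by
    have habs : |(1 / 2 : ℝ)| < 1 := by rw [abs_of_nonneg] <;> norm_num
    rw [(Real.hasSum_pow_div_log_of_abs_lt_one habs).tsum_eq,
      show (1 : ℝ) - 1 / 2 = 2⁻¹ by norm_num, Real.log_inv, neg_neg]
  rw [← hval]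
  apply tendsto_tsum_of_dominated_convergence
    (bound := fun k : ℕ => 2 * (1 / 2 : ℝ) ^ k)
  · exact (summable_geometric_of_lt_one (by norm_num) (by norm_num)).mul_left 2
  · exact fun k => h_tendsto' hBi k
  · have h0 := (h_tendsto' hBi 0).eventually_lt_const (u := 1) (by norm_num)
    have h1 := (h_tendsto' hBi 1).eventually_lt_const (u := 1) (by norm_num)
    filter_upwards [h0, h1, eventually_ge_atTop (16 : ℝ)] with x hx0 hx1 hx16
    intro k
    have hnn : ∀ m : ℕ, 0 ≤ ∑ p ∈ primesUpTo (Real.sqrt x),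
        (Real.log p / Real.log x) ^ (m + 1) / (p : ℝ) := by
      intro m
      refine Finset.sum_nonneg fun p hp => ?_
      obtain ⟨h1p, hr0, hr2⟩ := aux_bounds' hx16 hp
      have : (0:ℝ) < p := by linarith
      positivity
    rw [Real.norm_eq_abs, abs_of_nonneg (hnn k)]
    match k with
    | 0 => simpa using (hx0.le.trans (by norm_num))
    | (m + 1) =>
      have key : ∑ p ∈ primesUpTo (Real.sqrt x),
          (Real.log p / Real.log x) ^ (m + 1 + 1) / (p : ℝ)
          ≤ (1 / 2 : ℝ) ^ m * ∑ p ∈ primesUpTo (Real.sqrt x),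
            (Real.log p / Real.log x) ^ (1 + 1) / (p : ℝ) := by
        rw [Finset.mul_sum]
        refine Finset.sum_le_sum fun p hp => ?_
        obtain ⟨h1p, hr0, hr2⟩ := aux_bounds' hx16 hp
        have hp0 : (0:ℝ) < p := by linarith
        rw [← mul_div_assoc]
        gcongr
        calc (Real.log p / Real.log x) ^ (m + 1 + 1)
              = (Real.log p / Real.log x) ^ m * (Real.log p / Real.log x) ^ (1 + 1) := by
                rw [← pow_add]
          _ ≤ (1 / 2 : ℝ) ^ m * (Real.log p / Real.log x) ^ (1 + 1) := by
                apply mul_le_mul_of_nonneg_right (pow_le_pow_left₀ hr0 hr2 m)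
                positivity
      calc ∑ p ∈ primesUpTo (Real.sqrt x),
            (Real.log p / Real.log x) ^ (m + 1 + 1) / (p : ℝ)
          ≤ (1 / 2 : ℝ) ^ m * ∑ p ∈ primesUpTo (Real.sqrt x),
            (Real.log p / Real.log x) ^ (1 + 1) / (p : ℝ) := key
        _ ≤ (1 / 2 : ℝ) ^ m * 1 := by
            apply mul_le_mul_of_nonneg_left (hx1.le) (by positivity)
        _ = 2 * (1 / 2 : ℝ) ^ (m + 1) := by ring

theorem stmt8 (M : ℝ)
    (hM : Tendsto
      (fun x : ℝ => (∑ p ∈ primesUpTo x, (1 : ℝ) / (p : ℝ)) - Real.log (Real.log x))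
      atTop (nhds M))
    (hBi : ∀ i : ℕ, 1 ≤ i → ∃ B : ℝ, Tendsto
      (fun x : ℝ =>
        (∑ p ∈ primesUpTo x, (Real.log p) ^ i / (p : ℝ)) - (Real.log x) ^ i / (i : ℝ))
      atTop (nhds B)) :
    Tendsto
      (fun x : ℝ =>
        (∑ p ∈ primesUpTo (Real.sqrt x),
            Real.log x / ((p : ℝ) * (Real.log x - Real.log p)))
          - (Real.log (Real.log x) + M))
      atTop (nhds 0) := by
  have hA : Tendsto (fun x : ℝ =>
      (∑ p ∈ primesUpTo (Real.sqrt x), (1 : ℝ) / p)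
        - Real.log (Real.log (Real.sqrt x)) - M) atTop (nhds 0) := by
    have h1 := (hM.comp sqrt_tendsto_atTop').sub_const M
    simpa [Function.comp] using h1
  have hG := tail_tendsto' hBi
  have hcomb := hA.add (hG.sub_const (Real.log 2))
  rw [show (0:ℝ) + (Real.log 2 - Real.log 2) = 0 by ring] at hcomb
  refine hcomb.congr' ?_
  filter_upwards [eventually_ge_atTop (16 : ℝ)] with x hx
  have hL : (0 : ℝ) < Real.log x := Real.log_pos (by linarith)
  have hlog : Real.log (Real.log x) = Real.log 2 + Real.log (Real.log (Real.sqrt x)) := by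
    rw [Real.log_sqrt (by linarith : (0:ℝ) ≤ x),
      ← Real.log_mul two_ne_zero (ne_of_gt (by positivity : (0:ℝ) < Real.log x / 2))]
    congr 1
    ring
  rw [key_identity' hx, hlog]
  ring
end

section
/- For every integer n ≥ 1 and every real t with −1 < t < 1, the series Σ_{i=0}^∞ C(n+i, n−1)·t^{i+1}/(i+1) converges and equals −log(1−t) + Σ_{i=2}^{n} ((1−t)^{−(i−1)} − 1)/(i−1), where C(·,·) denotes the binomial coefficient. -/
open Finset

lemma aux10 (n : ℕ) (hn : 1 ≤ n) (t : ℝ) (ht : |t| < 1) :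
    HasSum (fun i : ℕ => ((n + i).choose n : ℝ) * t ^ (i + 1) / ((i : ℝ) + 1))
      (((1 - t) ^ (-(n : ℤ)) - 1) / n) := by
  have hA := hasSum_choose_mul_geometric_of_norm_lt_one (𝕜 := ℝ) (n - 1)
    (by rwa [Real.norm_eq_abs])
  rw [Nat.sub_add_cancel hn] at hA
  have hB := (hasSum_nat_add_iff'
    (f := fun j : ℕ => (((j + (n - 1)).choose (n - 1) : ℝ)) * t ^ j) 1).mpr hA
  simp only [Finset.range_one, Finset.sum_singleton, Nat.zero_add, Nat.choose_self,
    Nat.cast_one, pow_zero, mul_one] at hB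
  have hB' := hB.div_const n
  have hkey : ∀ i : ℕ, ((i + 1 + (n - 1)).choose (n - 1) : ℝ) * t ^ (i + 1) / n
      = ((n + i).choose n : ℝ) * t ^ (i + 1) / ((i : ℝ) + 1) := by
    intro i
    have h1 : i + 1 + (n - 1) = n + i := by omega
    have h2 : (n + i).choose (n - 1) * (i + 1) = (n + i).choose n * n := by
      have hs1 : (n + i).choose (n - 1) = (n + i).choose (i + 1) := by
        have := Nat.choose_symm (n := n + i) (k := i + 1) (by omega)
        rw [show n + i - (i + 1) = n - 1 by omega] at this
        exact this
      have hs2 : (n + i).choose i = (n + i).choose n := by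
        have := Nat.choose_symm (n := n + i) (k := n) (by omega)
        rw [show n + i - n = i by omega] at this
        exact this
      have h3 := Nat.choose_succ_right_eq (n + i) i
      rw [show n + i - i = n by omega] at h3
      rw [hs1, h3, hs2]
    have h2' : ((n + i).choose (n - 1) : ℝ) * ((i : ℝ) + 1) = ((n + i).choose n : ℝ) * n := by
      exact_mod_cast congrArg (Nat.cast : ℕ → ℝ) h2
    have hn0 : (n : ℝ) ≠ 0 := by positivity
    have hi0 : (i : ℝ) + 1 ≠ 0 := by positivity
    rw [h1]
    field_simp
    linear_combination t ^ (i + 1) * h2'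
  have hval : (1 / (1 - t) ^ n - 1) / (n : ℝ) = ((1 - t) ^ (-(n : ℤ)) - 1) / n := by
    rw [zpow_neg, zpow_natCast, one_div]
  rw [← hval]
  exact (hB'.congr_fun (fun i => (hkey i).symm))

theorem stmt10 (n : ℕ) (hn : 1 ≤ n) (t : ℝ) (ht1 : -1 < t) (ht2 : t < 1) :
    HasSum (fun i : ℕ => ((n + i).choose (n - 1) : ℝ) * t ^ (i + 1) / ((i : ℝ) + 1))
      (-Real.log (1 - t)
        + ∑ i ∈ Finset.Icc 2 n, ((1 - t) ^ (-((i : ℤ) - 1)) - 1) / ((i : ℝ) - 1)) := by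
  have ht : |t| < 1 := abs_lt.2 ⟨ht1, ht2⟩
  induction n, hn using Nat.le_induction with
  | base =>
    simpa using Real.hasSum_pow_div_log_of_abs_lt_one ht
  | succ n hn IH =>
    have h := IH.add (aux10 n hn t ht)
    have hfun : ∀ i : ℕ,
        ((n + i).choose (n - 1) : ℝ) * t ^ (i + 1) / ((i : ℝ) + 1)
          + ((n + i).choose n : ℝ) * t ^ (i + 1) / ((i : ℝ) + 1)
        = ((n + 1 + i).choose (n + 1 - 1) : ℝ) * t ^ (i + 1) / ((i : ℝ) + 1) := by
      intro i
      have hp : (n + 1 + i).choose n = (n + i).choose (n - 1) + (n + i).choose n := by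
        have := Nat.choose_succ_succ (n + i) (n - 1)
        rw [Nat.succ_eq_add_one, Nat.succ_eq_add_one, show n - 1 + 1 = n by omega] at this
        rw [show n + 1 + i = n + i + 1 by omega]
        exact this
      rw [show n + 1 - 1 = n from rfl, hp]
      push_cast
      ring
    have hsum : -Real.log (1 - t)
          + ∑ i ∈ Finset.Icc 2 n, ((1 - t) ^ (-((i : ℤ) - 1)) - 1) / ((i : ℝ) - 1)
          + ((1 - t) ^ (-(n : ℤ)) - 1) / n
        = -Real.log (1 - t)
          + ∑ i ∈ Finset.Icc 2 (n + 1), ((1 - t) ^ (-((i : ℤ) - 1)) - 1) / ((i : ℝ) - 1) := by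
      rw [Finset.sum_Icc_succ_top (by omega : 2 ≤ n + 1)]
      push_cast
      rw [show ((n : ℤ) + 1 - 1) = (n : ℤ) by ring]
      ring
    rw [← hsum]
    exact h.congr_fun (fun i => (hfun i).symm)
end

section
/- For all positive integers k and x, π_k(x) = Σ_{i=1}^{k} (−1)^{i−1} Σ_{p₁ < p₂ < … < p_i ≤ x^{1/k}} π_{k−i}(x/(p₁·p₂·…·p_i)), where the inner sum runs over all i-tuples of primes p₁ < p₂ < … < p_i with p_i ≤ x^{1/k}, and π₀ is the constant function 1. -/
open Finset

/-- The `k`-almost-prime counting function `π_k(x)`: for `k ≥ 1` the number of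
`m ≤ x` with exactly `k` prime factors counted with multiplicity (`Ω(m) = k`),
and `π₀(x) = 1` identically. -/
noncomputable def piK (k : ℕ) (x : ℝ) : ℕ :=
  if k = 0 then 1
  else ((Finset.range (⌊x⌋₊ + 1)).filter
    (fun m => ArithmeticFunction.cardFactors m = k)).card

open ArithmeticFunction
open scoped ArithmeticFunction.Omega

private lemma cardFactors_prod_primes (S : Finset ℕ) (hS : ∀ p ∈ S, p.Prime) :
    Ω (∏ p ∈ S, p) = S.card := by
  induction S using Finset.cons_induction with
  | empty => simp
  | cons p S hp ih =>
    have hpp : p.Prime := hS p (Finset.mem_cons_self _ _)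
    have hprod : ∏ q ∈ S, q ≠ 0 :=
      Finset.prod_ne_zero_iff.mpr fun q hq => (hS q (Finset.mem_cons_of_mem hq)).ne_zero
    rw [Finset.prod_cons, cardFactors_mul hpp.ne_zero hprod,
      cardFactors_apply_prime hpp, ih (fun q hq => hS q (Finset.mem_cons_of_mem hq)),
      Finset.card_cons, add_comm]

private lemma prod_primes_ne_zero (S : Finset ℕ) (hS : ∀ p ∈ S, p.Prime) :
    ∏ p ∈ S, p ≠ 0 :=
  Finset.prod_ne_zero_iff.mpr fun q hq => (hS q hq).ne_zero

/-- smallest prime power bound: if every prime factor of `m` is `≥ p`, then `p ^ Ω m ≤ m`. -/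
private lemma pow_cardFactors_le (p : ℕ) : ∀ m : ℕ, m ≠ 0 →
    (∀ q ∈ m.primeFactors, p ≤ q) → p ^ Ω m ≤ m := by
  intro m
  induction m using Nat.strong_induction_on with
  | _ m ih =>
    intro hm hq
    rcases eq_or_ne m 1 with rfl | hm1
    · simp
    have hqp : m.minFac.Prime := Nat.minFac_prime hm1
    obtain ⟨n, hmn⟩ := Nat.minFac_dvd m
    have hn0 : n ≠ 0 := by rintro rfl; rw [mul_zero] at hmn; exact hm hmn
    have hnlt : n < m := by
      rw [hmn]
      calc n = 1 * n := (one_mul n).symm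
        _ < m.minFac * n :=
          Nat.mul_lt_mul_of_lt_of_le hqp.one_lt le_rfl (Nat.pos_of_ne_zero hn0)
    have hΩ : Ω m = Ω n + 1 := by
      conv_lhs => rw [hmn]
      rw [cardFactors_mul hqp.ne_zero hn0, cardFactors_apply_prime hqp, add_comm]
    have hsub : n.primeFactors ⊆ m.primeFactors :=
      Nat.primeFactors_mono ⟨m.minFac, hmn.trans (mul_comm _ _)⟩ hm
    have hple : p ≤ m.minFac := hq _ (Nat.mem_primeFactors.mpr ⟨hqp, Nat.minFac_dvd m, hm⟩)
    calc p ^ Ω m = p ^ Ω n * p := by rw [hΩ, pow_succ]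
      _ ≤ n * m.minFac :=
        Nat.mul_le_mul (ih n hnlt hn0 fun q hqn => hq q (hsub hqn)) hple
      _ = m := (mul_comm n m.minFac).trans hmn.symm

private lemma alt_sum_choose (k d : ℕ) (hd1 : 1 ≤ d) (hdk : d ≤ k) :
    ∑ i ∈ Finset.Icc 1 k, (-1 : ℝ) ^ (i - 1) * (d.choose i : ℝ) = 1 := by
  have h0 : ∑ i ∈ Finset.range (d + 1), (-1 : ℝ) ^ i * (d.choose i : ℝ) = 0 := by
    have := Int.alternating_sum_range_choose (n := d)
    rw [if_neg (show ¬ d = 0 by omega)] at this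
    have := congrArg (fun z : ℤ => (z : ℝ)) this
    push_cast at this
    simpa using this
  have hbig : ∑ i ∈ Finset.range (k + 1), (-1 : ℝ) ^ i * (d.choose i : ℝ) = 0 := by
    rw [← h0]
    refine (Finset.sum_subset (Finset.range_subset_range.mpr (by omega)) ?_).symm
    intro i _ hi
    rw [Nat.choose_eq_zero_of_lt (by simp only [Finset.mem_range] at hi; omega)]
    simp
  have hsplit : ∑ i ∈ Finset.range (k + 1), (-1 : ℝ) ^ i * (d.choose i : ℝ)
      = (∑ i ∈ Finset.Icc 1 k, (-1 : ℝ) ^ i * (d.choose i : ℝ)) + 1 := by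
    rw [Finset.sum_range_succ' (fun i => (-1 : ℝ) ^ i * (d.choose i : ℝ)) k]
    have : Finset.Icc 1 k = Finset.Ico 1 (k + 1) := by
      rw [Finset.Ico_add_one_right_eq_Icc]
    rw [this, Finset.sum_Ico_eq_sum_range]
    simp [add_comm 1]
  have hIcc : ∑ i ∈ Finset.Icc 1 k, (-1 : ℝ) ^ i * (d.choose i : ℝ) = -1 := by
    have := hbig
    rw [hsplit] at this
    linarith
  have : ∑ i ∈ Finset.Icc 1 k, (-1 : ℝ) ^ (i - 1) * (d.choose i : ℝ)
      = -∑ i ∈ Finset.Icc 1 k, (-1 : ℝ) ^ i * (d.choose i : ℝ) := by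
    rw [← Finset.sum_neg_distrib]
    apply Finset.sum_congr rfl
    intro i hi
    have hi1 : 1 ≤ i := (Finset.mem_Icc.mp hi).1
    have : (-1 : ℝ) ^ i = -(-1 : ℝ) ^ (i - 1) := by
      conv_lhs => rw [show i = (i - 1) + 1 by omega]
      rw [pow_succ]
      ring
    rw [this]
    ring
  rw [this, hIcc]
  norm_num

theorem stmt14 (k x : ℕ) (hk : 0 < k) (hx : 0 < x) :
    (piK k x : ℝ) =
      ∑ i ∈ Finset.Icc 1 k, (-1 : ℝ) ^ (i - 1) *
        ∑ s ∈ (primesUpTo ((x : ℝ) ^ ((1 : ℝ) / (k : ℝ)))).powersetCard i,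
          (piK (k - i) ((x : ℝ) / ∏ p ∈ s, (p : ℝ)) : ℝ) := by
  set y : ℝ := (x : ℝ) ^ ((1 : ℝ) / (k : ℝ)) with hy
  set P : Finset ℕ := primesUpTo y with hPdef
  set M : Finset ℕ := (Finset.range (x + 1)).filter (fun m => Ω m = k) with hMdef
  have hx1 : (1 : ℝ) ≤ (x : ℝ) := by exact_mod_cast hx
  have hy0 : 0 ≤ y := Real.rpow_nonneg (by positivity) _
  have hy1 : (1 : ℝ) ≤ y := Real.one_le_rpow hx1 (by positivity)
  have hyk : y ^ k = (x : ℝ) := by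
    rw [hy, ← Real.rpow_natCast ((x : ℝ) ^ ((1 : ℝ) / (k : ℝ))) k,
      ← Real.rpow_mul (by positivity), one_div,
      inv_mul_cancel₀ (by exact_mod_cast hk.ne'), Real.rpow_one]
  have hPmem : ∀ p : ℕ, p ∈ P ↔ p.Prime ∧ (p : ℝ) ≤ y := by
    intro p
    rw [hPdef]
    simp only [primesUpTo, Finset.mem_filter, Finset.mem_range, Nat.lt_succ_iff,
      Nat.le_floor_iff hy0]
    tauto
  -- facts about members of M
  have hMfact : ∀ m ∈ M, m ≤ x ∧ Ω m = k ∧ m ≠ 0 ∧ m ≠ 1 := by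
    intro m hm
    rw [hMdef, Finset.mem_filter, Finset.mem_range, Nat.lt_succ_iff] at hm
    refine ⟨hm.1, hm.2, ?_, ?_⟩
    · intro h; rw [h] at hm; simp [cardFactors_zero] at hm; omega
    · intro h; rw [h] at hm; simp [cardFactors_one] at hm; omega
  -- facts about subsets S of P
  have hSfact : ∀ i : ℕ, ∀ S ∈ P.powersetCard i,
      (∀ p ∈ S, p.Prime) ∧ ((∏ p ∈ S, p : ℕ) : ℝ) = ∏ p ∈ S, (p : ℝ) ∧
        (∏ p ∈ S, p : ℕ) ≠ 0 ∧ ((∏ p ∈ S, p : ℕ) : ℝ) ≤ y ^ i ∧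
        Ω (∏ p ∈ S, p) = i := by
    intro i S hS
    rw [Finset.mem_powersetCard] at hS
    have hprime : ∀ p ∈ S, p.Prime := fun p hp => ((hPmem p).mp (hS.1 hp)).1
    have hcast : ((∏ p ∈ S, p : ℕ) : ℝ) = ∏ p ∈ S, (p : ℝ) := by push_cast; rfl
    refine ⟨hprime, hcast, prod_primes_ne_zero S hprime, ?_, ?_⟩
    · rw [hcast, ← hS.2, ← Finset.prod_const]
      exact Finset.prod_le_prod (fun p _ => by positivity)
        (fun p hp => ((hPmem p).mp (hS.1 hp)).2)
    · rw [cardFactors_prod_primes S hprime, hS.2]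
  -- key: inner count equals count over M
  have hinner : ∀ i ∈ Finset.Icc 1 k, ∀ S ∈ P.powersetCard i,
      piK (k - i) ((x : ℝ) / ∏ p ∈ S, (p : ℝ))
        = (M.filter (fun m => S ⊆ m.primeFactors)).card := by
    intro i hi S hS
    obtain ⟨hi1, hik⟩ := Finset.mem_Icc.mp hi
    obtain ⟨hprime, hcast, hq0, hqle, hΩq⟩ := hSfact i S hS
    set q : ℕ := ∏ p ∈ S, p with hqdef
    have hq0' : 0 < q := Nat.pos_of_ne_zero hq0
    have hqR : (0 : ℝ) < (q : ℝ) := by exact_mod_cast hq0'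
    have hqdvd : ∀ m ∈ M, S ⊆ m.primeFactors → q ∣ m := by
      intro m hm hsub
      exact dvd_trans (Finset.prod_dvd_prod_of_subset _ _ _ hsub)
        (Nat.prod_primeFactors_dvd m)
    rcases eq_or_lt_of_le hik with rfl | hilt
    · -- i = k : count is 1, unique element q
      rw [piK, if_pos (by omega)]
      symm
      rw [Finset.card_eq_one]
      refine ⟨q, Finset.eq_singleton_iff_unique_mem.mpr ⟨?_, ?_⟩⟩
      · rw [Finset.mem_filter, hMdef, Finset.mem_filter, Finset.mem_range,
          Nat.lt_succ_iff]
        refine ⟨⟨?_, hΩq⟩, ?_⟩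
        · have : ((q : ℕ) : ℝ) ≤ (x : ℝ) := by rw [← hyk]; exact hqle
          exact_mod_cast this
        · intro p hp
          exact Nat.mem_primeFactors.mpr
            ⟨hprime p hp, Finset.dvd_prod_of_mem _ hp, hq0⟩
      · intro m hm
        rw [Finset.mem_filter] at hm
        obtain ⟨hmM, hsub⟩ := hm
        obtain ⟨hmx, hΩm, hm0, hm1⟩ := hMfact m hmM
        have hdvd : q ∣ m := hqdvd m hmM hsub
        obtain ⟨t, ht⟩ := hdvd
        have ht0 : t ≠ 0 := by rintro rfl; simp at ht; exact hm0 ht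
        have : Ω t = 0 := by
          have := hΩm
          rw [ht, cardFactors_mul hq0 ht0, hΩq] at this
          omega
        have ht1 : t = 1 := by
          rw [cardFactors_apply, List.length_eq_zero_iff] at this
          rcases (Nat.primeFactorsList_eq_nil t).mp this with h | h
          · exact absurd h ht0
          · exact h
        rw [ht, ht1, mul_one]
    · -- i < k : bijection n ↦ n * q
      have hki : k - i ≠ 0 := by omega
      rw [piK, if_neg hki]
      apply Finset.card_bij' (fun n _ => n * q) (fun m _ => m / q)
      · -- maps into target
        intro n hn
        rw [Finset.mem_filter, Finset.mem_range, Nat.lt_succ_iff,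
          Nat.le_floor_iff (by positivity)] at hn
        obtain ⟨hnle, hΩn⟩ := hn
        rw [← hcast] at hnle
        have hn0 : n ≠ 0 := by
          rintro rfl; rw [cardFactors_zero] at hΩn; omega
        rw [Finset.mem_filter]
        constructor
        · rw [hMdef, Finset.mem_filter, Finset.mem_range, Nat.lt_succ_iff]
          constructor
          · have h1 : ((n * q : ℕ) : ℝ) ≤ (x : ℝ) := by
              push_cast
              calc (n : ℝ) * (q : ℝ) ≤ ((x : ℝ) / (q : ℝ)) * (q : ℝ) :=
                    mul_le_mul_of_nonneg_right hnle (le_of_lt hqR)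
                _ = (x : ℝ) := div_mul_cancel₀ _ (ne_of_gt hqR)
            exact_mod_cast h1
          · rw [cardFactors_mul hn0 hq0, hΩn, hΩq]; omega
        · intro p hp
          exact Nat.mem_primeFactors.mpr
            ⟨hprime p hp, dvd_mul_of_dvd_right (Finset.dvd_prod_of_mem _ hp) n,
              by positivity⟩
      · -- inverse maps into source
        intro m hm
        rw [Finset.mem_filter] at hm
        obtain ⟨hmM, hsub⟩ := hm
        obtain ⟨hmx, hΩm, hm0, hm1⟩ := hMfact m hmM
        have hdvd : q ∣ m := hqdvd m hmM hsub
        have hmq : m / q * q = m := Nat.div_mul_cancel hdvd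
        have hmq0 : m / q ≠ 0 := by
          intro h; rw [h, zero_mul] at hmq; exact hm0 hmq.symm
        rw [Finset.mem_filter, Finset.mem_range, Nat.lt_succ_iff,
          Nat.le_floor_iff (by positivity)]
        constructor
        · rw [← hcast, Nat.cast_div hdvd (ne_of_gt hqR)]
          apply div_le_div_of_nonneg_right ?_ ?_
          · exact_mod_cast hmx
          · exact hqR.le
        · have : Ω m = Ω (m / q) + Ω q := by
            conv_lhs => rw [← hmq]
            exact cardFactors_mul hmq0 hq0
          rw [hΩm, hΩq] at this
          omega
      · intro n hn
        rw [Nat.mul_div_assoc n dvd_rfl, Nat.div_self hq0', mul_one]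
      · intro m hm
        rw [Finset.mem_filter] at hm
        exact Nat.div_mul_cancel (hqdvd m hm.1 hm.2)
  -- rewrite each inner sum as a sum over M of binomial coefficients
  have hswap : ∀ i ∈ Finset.Icc 1 k,
      ∑ s ∈ P.powersetCard i, (piK (k - i) ((x : ℝ) / ∏ p ∈ s, (p : ℝ)) : ℝ)
        = ∑ m ∈ M, (((P ∩ m.primeFactors).card.choose i : ℕ) : ℝ) := by
    intro i hi
    calc ∑ s ∈ P.powersetCard i, (piK (k - i) ((x : ℝ) / ∏ p ∈ s, (p : ℝ)) : ℝ)
        = ∑ S ∈ P.powersetCard i,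
            ((M.filter (fun m => S ⊆ m.primeFactors)).card : ℝ) :=
          Finset.sum_congr rfl (fun S hS => by rw [hinner i hi S hS])
      _ = ∑ S ∈ P.powersetCard i, ∑ m ∈ M,
            (if S ⊆ m.primeFactors then (1 : ℝ) else 0) := by
          refine Finset.sum_congr rfl (fun S _ => ?_)
          rw [Finset.card_filter]
          push_cast
          rfl
      _ = ∑ m ∈ M, ∑ S ∈ P.powersetCard i,
            (if S ⊆ m.primeFactors then (1 : ℝ) else 0) := Finset.sum_comm
      _ = ∑ m ∈ M, (((P ∩ m.primeFactors).card.choose i : ℕ) : ℝ) := ?_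
    apply Finset.sum_congr rfl
    intro m _
    have hfe : (P.powersetCard i).filter (fun S => S ⊆ m.primeFactors)
        = (P ∩ m.primeFactors).powersetCard i := by
      ext S
      simp only [Finset.mem_filter, Finset.mem_powersetCard,
        Finset.subset_inter_iff]
      tauto
    rw [← Finset.sum_filter, Finset.sum_const, hfe, Finset.card_powersetCard]
    simp [mul_comm]
  -- bounds on d m
  have hd : ∀ m ∈ M, 1 ≤ (P ∩ m.primeFactors).card ∧ (P ∩ m.primeFactors).card ≤ k := by
    intro m hm
    obtain ⟨hmx, hΩm, hm0, hm1⟩ := hMfact m hm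
    constructor
    · have hmin : m.minFac ∈ P ∩ m.primeFactors := by
        rw [Finset.mem_inter]
        have hqp : m.minFac.Prime := Nat.minFac_prime hm1
        refine ⟨(hPmem _).mpr ⟨hqp, ?_⟩,
          Nat.mem_primeFactors.mpr ⟨hqp, Nat.minFac_dvd m, hm0⟩⟩
        have hpow : m.minFac ^ k ≤ m := by
          rw [← hΩm]
          exact pow_cardFactors_le _ m hm0 (fun q hq =>
            Nat.minFac_le_of_dvd (Nat.mem_primeFactors.mp hq).1.two_le
              (Nat.mem_primeFactors.mp hq).2.1)
        have hcmp : ((m.minFac : ℝ)) ^ k ≤ y ^ k := by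
          calc ((m.minFac : ℝ)) ^ k ≤ (m : ℝ) := by exact_mod_cast hpow
            _ ≤ (x : ℝ) := by exact_mod_cast hmx
            _ = y ^ k := hyk.symm
        exact (pow_le_pow_iff_left₀ (by positivity) hy0 hk.ne').mp hcmp
      exact Finset.card_pos.mpr ⟨_, hmin⟩
    · calc (P ∩ m.primeFactors).card ≤ m.primeFactors.card :=
            Finset.card_le_card (Finset.inter_subset_right)
        _ ≤ Ω m := by
            rw [Nat.primeFactors, List.card_toFinset, cardFactors_apply]
            exact List.Sublist.length_le (List.dedup_sublist _)
        _ = k := hΩm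
  -- final assembly
  have hLHS : (piK k x : ℝ) = (M.card : ℝ) := by
    rw [piK, if_neg hk.ne', hMdef, Nat.floor_natCast]
  rw [hLHS, Finset.sum_congr rfl (fun i hi => by rw [hswap i hi]),
    Finset.sum_congr rfl (fun i _ =>
      Finset.mul_sum M (fun m => (((P ∩ m.primeFactors).card.choose i : ℕ) : ℝ))
        ((-1 : ℝ) ^ (i - 1))),
    Finset.sum_comm,
    Finset.sum_congr rfl (fun m hm =>
      alt_sum_choose k _ (hd m hm).1 (hd m hm).2)]
  simp [Finset.sum_const]
end

section
/- For every integer n ≥ 1, (2^n/n)·Σ_{i=0}^{n−1} 1/C(n−1, i) = Σ_{i=1}^{n} 2^i/i; equivalently, 2^n·Σ_{i=1}^{n} (i−1)!·(n−i)! = n!·Σ_{i=1}^{n} 2^i/i. -/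
open Finset

def Anat (n : ℕ) : ℕ := ∑ i ∈ Finset.range n, Nat.factorial i * Nat.factorial (n - 1 - i)

lemma Anat_rec (n : ℕ) : 2 * Anat (n + 1) = (n + 1) * Anat n + 2 * Nat.factorial n := by
  have hS : Anat (n + 1) = ∑ i ∈ Finset.range (n + 1),
      Nat.factorial i * Nat.factorial (n - i) := by
    unfold Anat
    exact Finset.sum_congr rfl fun i _ => by simp
  have h1 : Anat (n + 1) = (∑ i ∈ Finset.range n,
      Nat.factorial i * Nat.factorial (n - i)) + Nat.factorial n := by
    rw [hS, Finset.sum_range_succ]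
    simp
  have h2 : Anat (n + 1) = (∑ i ∈ Finset.range n,
      Nat.factorial (i + 1) * Nat.factorial (n - (i + 1))) + Nat.factorial n := by
    rw [hS, Finset.sum_range_succ']
    simp
  have key : ∀ i ∈ Finset.range n,
      Nat.factorial i * Nat.factorial (n - i)
        + Nat.factorial (i + 1) * Nat.factorial (n - (i + 1))
      = (n + 1) * (Nat.factorial i * Nat.factorial (n - 1 - i)) := by
    intro i hi
    have hi' : i < n := Finset.mem_range.mp hi
    have e1 : n - i = (n - 1 - i) + 1 := by omega
    rw [e1, Nat.factorial_succ, Nat.factorial_succ]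
    have e2 : (n - 1 - i + 1) + (i + 1) = n + 1 := by omega
    have e3 : n - (i + 1) = n - 1 - i := by omega
    rw [e3, ← e2]
    ring
  calc 2 * Anat (n + 1)
      = ((∑ i ∈ Finset.range n, Nat.factorial i * Nat.factorial (n - i))
          + (∑ i ∈ Finset.range n, Nat.factorial (i + 1) * Nat.factorial (n - (i + 1))))
          + 2 * Nat.factorial n := by omega
    _ = (∑ i ∈ Finset.range n, (Nat.factorial i * Nat.factorial (n - i)
          + Nat.factorial (i + 1) * Nat.factorial (n - (i + 1)))) + 2 * Nat.factorial n := by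
        rw [Finset.sum_add_distrib]
    _ = (∑ i ∈ Finset.range n, (n + 1) * (Nat.factorial i * Nat.factorial (n - 1 - i)))
          + 2 * Nat.factorial n := by rw [Finset.sum_congr rfl key]
    _ = (n + 1) * Anat n + 2 * Nat.factorial n := by rw [← Finset.mul_sum]; rfl

lemma part2 (n : ℕ) (hn : 1 ≤ n) :
    (2 : ℝ) ^ n * (Anat n : ℝ)
      = (Nat.factorial n : ℝ) * ∑ i ∈ Finset.Icc 1 n, (2 : ℝ) ^ i / (i : ℝ) := by
  induction n, hn using Nat.le_induction with
  | base => norm_num [Anat]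
  | succ n hn ih =>
    have hsum : ∑ i ∈ Finset.Icc 1 (n + 1), (2 : ℝ) ^ i / (i : ℝ)
        = (∑ i ∈ Finset.Icc 1 n, (2 : ℝ) ^ i / (i : ℝ)) + 2 ^ (n + 1) / (n + 1) := by
      rw [Finset.sum_Icc_succ_top (by omega)]
      push_cast; ring_nf
    have hrec : (2 : ℝ) * (Anat (n + 1) : ℝ)
        = ((n : ℝ) + 1) * (Anat n : ℝ) + 2 * (Nat.factorial n : ℝ) := by
      have := Anat_rec n
      exact_mod_cast congrArg (fun k : ℕ => (k : ℝ)) this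
    have hne : ((n : ℝ) + 1) ≠ 0 := by positivity
    have hfact : (Nat.factorial (n + 1) : ℝ) = ((n : ℝ) + 1) * (Nat.factorial n : ℝ) := by
      rw [Nat.factorial_succ]; push_cast; ring
    rw [hsum, hfact]
    have : (2 : ℝ) ^ (n + 1) * (Anat (n + 1) : ℝ)
        = 2 ^ n * (2 * (Anat (n + 1) : ℝ)) := by ring
    rw [this, hrec]
    field_simp
    ring_nf
    ring_nf at ih
    nlinarith [ih]

theorem stmt18 (n : ℕ) (hn : 1 ≤ n) :
    ((2 : ℝ) ^ n / (n : ℝ)) *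
        ∑ i ∈ Finset.range n, (1 : ℝ) / ((n - 1).choose i : ℝ)
      = ∑ i ∈ Finset.Icc 1 n, (2 : ℝ) ^ i / (i : ℝ)
    ∧ (2 : ℝ) ^ n *
        ∑ i ∈ Finset.Icc 1 n, (Nat.factorial (i - 1) : ℝ) * (Nat.factorial (n - i) : ℝ)
      = (Nat.factorial n : ℝ) * ∑ i ∈ Finset.Icc 1 n, (2 : ℝ) ^ i / (i : ℝ) := by
  have hA : ∑ i ∈ Finset.Icc 1 n, (Nat.factorial (i - 1) : ℝ) * (Nat.factorial (n - i) : ℝ)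
      = (Anat n : ℝ) := by
    unfold Anat
    push_cast
    rw [← Finset.Ico_add_one_right_eq_Icc, Finset.sum_Ico_eq_sum_range]
    apply Finset.sum_congr (by norm_num)
    intro i _
    rw [show 1 + i - 1 = i from by omega, show n - (1 + i) = n - 1 - i from by omega]
  have h2 := part2 n hn
  refine ⟨?_, by rw [hA]; exact h2⟩
  have hterm : ∀ i ∈ Finset.range n, (1 : ℝ) / ((n - 1).choose i : ℝ)
      = (Nat.factorial i : ℝ) * (Nat.factorial (n - 1 - i) : ℝ) / (Nat.factorial (n - 1) : ℝ) := by
    intro i hi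
    have hi' : i ≤ n - 1 := by have := Finset.mem_range.mp hi; omega
    have hcf := Nat.choose_mul_factorial_mul_factorial hi'
    have hc : ((n - 1).choose i : ℝ) * (Nat.factorial i : ℝ) * (Nat.factorial (n - 1 - i) : ℝ)
        = (Nat.factorial (n - 1) : ℝ) := by exact_mod_cast hcf
    have hcne : ((n - 1).choose i : ℝ) ≠ 0 := by
      exact_mod_cast (Nat.choose_pos hi').ne'
    have hfne : (Nat.factorial (n - 1) : ℝ) ≠ 0 := by
      exact_mod_cast (Nat.factorial_pos (n - 1)).ne'
    field_simp
    linarith [hc]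
  rw [Finset.sum_congr rfl hterm, ← Finset.sum_div]
  have hAn : ∑ i ∈ Finset.range n, (Nat.factorial i : ℝ) * (Nat.factorial (n - 1 - i) : ℝ)
      = (Anat n : ℝ) := by unfold Anat; push_cast; rfl
  rw [hAn]
  have hnfact : (n : ℝ) * (Nat.factorial (n - 1) : ℝ) = (Nat.factorial n : ℝ) := by
    exact_mod_cast Nat.mul_factorial_pred (by omega)
  have hfne : (Nat.factorial (n - 1) : ℝ) ≠ 0 := by
    exact_mod_cast (Nat.factorial_pos (n - 1)).ne'
  have hnne : (n : ℝ) ≠ 0 := Nat.cast_ne_zero.mpr (by omega)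
  have hfn : (Nat.factorial n : ℝ) ≠ 0 := by
    exact_mod_cast (Nat.factorial_pos n).ne'
  rw [div_mul_div_comm, hnfact, h2, mul_comm, mul_div_assoc, div_self hfn, mul_one]
end
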